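/- arXiv:0909.0443 — 5 statements merged into one kernel-verified Lean document; each statement's English description precedes it below -/
import Mathlib

section
/- Let p = kt + r with 0 < r < t < p and k ≥ 1. Then there exists a partial (t-1)-spread of PG(p-1, 2), i.e., a collection of pairwise disjoint t-dimensional linear subspaces of GF(2)^p (pairwise intersections equal {0}), of cardinality 2^r·(2^{kt} - 1)/(2^t - 1) - 2^r + 1. -/
open Module

noncomputable section

namespace PSaux

/-- window embedding into coordinates `[s, s+len)`. -/
def win (p s len : ℕ) : (Fin len → ZMod 2) →ₗ[ZMod 2] (Fin p → ZMod 2) where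
  toFun x := fun j => if h : s ≤ j.val ∧ j.val < s + len then x ⟨j.val - s, by omega⟩ else 0
  map_add' x y := by
    funext j
    by_cases h : s ≤ j.val ∧ j.val < s + len <;> simp [h]
  map_smul' c x := by
    funext j
    by_cases h : s ≤ j.val ∧ j.val < s + len <;> simp [h]

lemma win_apply_pos (p s len : ℕ) (x : Fin len → ZMod 2) (j : Fin p)
    (h1 : s ≤ j.val) (h2 : j.val < s + len) :
    win p s len x j = x ⟨j.val - s, by omega⟩ := dif_pos ⟨h1, h2⟩

lemma win_apply_neg (p s len : ℕ) (x : Fin len → ZMod 2) (j : Fin p)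
    (h : ¬ (s ≤ j.val ∧ j.val < s + len)) :
    win p s len x j = 0 := dif_neg h

lemma win_apply_at (p s len : ℕ) (x : Fin len → ZMod 2) (j : Fin len)
    (hj : s + j.val < p) :
    win p s len x ⟨s + j.val, hj⟩ = x j := by
  rw [win_apply_pos p s len x _ (by simp) (by simp [j.isLt])]
  congr 1
  exact Fin.ext (by simp)

abbrev F (m : ℕ) : Type := GaloisField 2 m

def e (m : ℕ) (h : m ≠ 0) : F m ≃ₗ[ZMod 2] (Fin m → ZMod 2) :=
  LinearEquiv.ofFinrankEq _ _
    (by rw [GaloisField.finrank 2 h, Module.finrank_fin_fun])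

def κ (t m : ℕ) (h : m ≠ 0) : (Fin t → ZMod 2) →ₗ[ZMod 2] F m :=
  (e m h).symm.toLinearMap ∘ₗ win m 0 t

lemma κ_inj (t m : ℕ) (h : m ≠ 0) (ht : t ≤ m) {x : Fin t → ZMod 2}
    (hx : κ t m h x = 0) : x = 0 := by
  have h1 : win m 0 t x = 0 := by
    have := congrArg (e m h) hx
    simpa [κ] using this
  funext j
  have := congrFun h1 ⟨0 + j.val, by omega⟩
  rwa [win_apply_at] at this

def μ (t m : ℕ) (h : m ≠ 0) (a : F m) :
    (Fin t → ZMod 2) →ₗ[ZMod 2] (Fin m → ZMod 2) :=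
  (e m h).toLinearMap ∘ₗ LinearMap.mulLeft (ZMod 2) a ∘ₗ κ t m h

lemma μ_cancel (t m : ℕ) (h : m ≠ 0) (ht : t ≤ m) {a b : F m} (hab : a ≠ b)
    {x : Fin t → ZMod 2} (hx : μ t m h a x = μ t m h b x) : x = 0 := by
  have h1 : a * κ t m h x = b * κ t m h x := (e m h).injective hx
  have h2 : κ t m h x = 0 := by
    by_contra hne
    exact hab (mul_right_cancel₀ hne h1)
  exact κ_inj t m h ht h2

/-- the graph map whose range is a spread element at level `m`. -/
def gmap (p t m : ℕ) (h : m ≠ 0) (a : F m) :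
    (Fin t → ZMod 2) →ₗ[ZMod 2] (Fin p → ZMod 2) :=
  win p 0 m ∘ₗ μ t m h a + win p m t

lemma gmap_apply_window (p t m : ℕ) (h : m ≠ 0) (a : F m) (x : Fin t → ZMod 2)
    (j : Fin t) (hj : m + j.val < p) :
    gmap p t m h a x ⟨m + j.val, hj⟩ = x j := by
  simp only [gmap, LinearMap.add_apply, LinearMap.comp_apply, Pi.add_apply]
  rw [win_apply_neg p 0 m _ _ (by simp), win_apply_at, zero_add]

lemma gmap_apply_high (p t m : ℕ) (h : m ≠ 0) (a : F m) (x : Fin t → ZMod 2)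
    (j : Fin p) (hj : m + t ≤ j.val) :
    gmap p t m h a x j = 0 := by
  simp only [gmap, LinearMap.add_apply, LinearMap.comp_apply, Pi.add_apply]
  rw [win_apply_neg p 0 m _ _ (by omega), win_apply_neg p m t _ _ (by omega), add_zero]

lemma gmap_apply_low (p t m : ℕ) (h : m ≠ 0) (a : F m) (x : Fin t → ZMod 2)
    (j : Fin p) (hj : j.val < m) :
    gmap p t m h a x j = μ t m h a x ⟨j.val, hj⟩ := by
  simp only [gmap, LinearMap.add_apply, LinearMap.comp_apply, Pi.add_apply]
  rw [win_apply_pos p 0 m _ _ (by omega) (by omega), win_apply_neg p m t _ _ (by omega),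
    add_zero]
  congr 1


lemma win_range_high {p s len : ℕ} {v : Fin p → ZMod 2}
    (hv : v ∈ LinearMap.range (win p s len)) (j : Fin p) (hj : s + len ≤ j.val) :
    v j = 0 := by
  obtain ⟨x, rfl⟩ := hv
  exact win_apply_neg _ _ _ _ _ (by omega)

lemma win_range_det {p s len : ℕ} (hsl : s + len ≤ p) {v : Fin p → ZMod 2}
    (hv : v ∈ LinearMap.range (win p s len))
    (h0 : ∀ j : Fin p, s ≤ j.val → j.val < s + len → v j = 0) : v = 0 := by
  obtain ⟨x, rfl⟩ := hv
  have hx : x = 0 := by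
    funext j
    have hj := j.isLt
    have := h0 ⟨s + j.val, by omega⟩ (Nat.le_add_right s j.val)
      (Nat.add_lt_add_left j.isLt s)
    rwa [win_apply_at] at this
  rw [hx, map_zero]

lemma win_injective {p s len : ℕ} (hsl : s + len ≤ p) :
    Function.Injective (win p s len) := by
  intro x y hxy
  funext j
  have hj := j.isLt
  have := congrFun hxy ⟨s + j.val, by omega⟩
  rwa [win_apply_at, win_apply_at] at this

lemma gmap_range_high {p t m : ℕ} {h : m ≠ 0} {a : F m} {v : Fin p → ZMod 2}
    (hv : v ∈ LinearMap.range (gmap p t m h a)) (j : Fin p) (hj : m + t ≤ j.val) :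
    v j = 0 := by
  obtain ⟨x, rfl⟩ := hv
  exact gmap_apply_high p t m h a x j hj

lemma gmap_range_det {p t m : ℕ} {h : m ≠ 0} {a : F m} (hmp : m + t ≤ p)
    {v : Fin p → ZMod 2} (hv : v ∈ LinearMap.range (gmap p t m h a))
    (h0 : ∀ j : Fin p, m ≤ j.val → j.val < m + t → v j = 0) : v = 0 := by
  obtain ⟨x, rfl⟩ := hv
  have hx : x = 0 := by
    funext j
    have hj := j.isLt
    have := h0 ⟨m + j.val, by omega⟩ (Nat.le_add_right m j.val)
      (Nat.add_lt_add_left j.isLt m)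
    rwa [gmap_apply_window] at this
  rw [hx, map_zero]

lemma gmap_injective {p t m : ℕ} {h : m ≠ 0} {a : F m} (hmp : m + t ≤ p) :
    Function.Injective (gmap p t m h a) := by
  intro x y hxy
  funext j
  have hj := j.isLt
  have := congrFun hxy ⟨m + j.val, by omega⟩
  rwa [gmap_apply_window, gmap_apply_window] at this

lemma disj_of {p : ℕ} (t : ℕ) (W₁ W₂ : Submodule (ZMod 2) (Fin p → ZMod 2)) (c s : ℕ)
    (hcs : c ≤ s)
    (h1 : ∀ v ∈ W₁, ∀ j : Fin p, c ≤ j.val → v j = 0)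
    (h2 : ∀ v ∈ W₂, (∀ j : Fin p, s ≤ j.val → j.val < s + t → v j = 0) → v = 0) :
    W₁ ⊓ W₂ = ⊥ := by
  rw [eq_bot_iff]
  intro v hv
  obtain ⟨hv1, hv2⟩ := Submodule.mem_inf.mp hv
  rw [Submodule.mem_bot]
  exact h2 v hv2 fun j hj _ => h1 v hv1 j (le_trans hcs hj)

lemma same_level {p t m : ℕ} {h : m ≠ 0} (hmp : m + t ≤ p) (ht : t ≤ m)
    {a b : F m} (hab : a ≠ b) :
    LinearMap.range (gmap p t m h a) ⊓ LinearMap.range (gmap p t m h b) = ⊥ := by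
  rw [eq_bot_iff]
  intro v hv
  obtain ⟨hva, hvb⟩ := Submodule.mem_inf.mp hv
  obtain ⟨x, hx⟩ := hva
  obtain ⟨y, hy⟩ := hvb
  have hxy : x = y := by
    funext j
    have hj := j.isLt
    have e1 : v ⟨m + j.val, by omega⟩ = x j := by
      rw [← hx, gmap_apply_window]
    have e2 : v ⟨m + j.val, by omega⟩ = y j := by
      rw [← hy, gmap_apply_window]
    rw [← e1, e2]
  have hμ : μ t m h a x = μ t m h b x := by
    funext jm
    have hjm := jm.isLt
    have e1 : v ⟨jm.val, by omega⟩ = μ t m h a x jm := by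
      rw [← hx, gmap_apply_low]
    have e2 : v ⟨jm.val, by omega⟩ = μ t m h b x jm := by
      rw [← hy, hxy, gmap_apply_low]
    rw [← e1, e2]
  have hx0 : x = 0 := μ_cancel t m h ht hab hμ
  rw [Submodule.mem_bot, ← hx, hx0, map_zero]

lemma count (t r k : ℕ) (hk : 1 ≤ k) (hr : 0 < r) (hrt : r < t) :
    (∑ i : Fin (k - 1), 2 ^ ((i.val + 1) * t + r)) + 1
      = 2 ^ r * ((2 ^ (k * t) - 1) / (2 ^ t - 1)) - 2 ^ r + 1 := by
  obtain ⟨n, rfl⟩ : ∃ n, k = n + 1 := ⟨k - 1, by omega⟩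
  have h2t : 2 ≤ 2 ^ t := by
    calc (2:ℕ) = 2 ^ 1 := (pow_one 2).symm
    _ ≤ 2 ^ t := Nat.pow_le_pow_right (by norm_num) (by omega)
  rw [show (n + 1) * t = t * (n + 1) from Nat.mul_comm _ _, pow_mul,
    ← Nat.geomSum_eq h2t (n + 1), Finset.sum_range_succ' (fun i => (2 ^ t) ^ i) n,
    pow_zero]
  have hfin : (∑ i : Fin (n + 1 - 1), 2 ^ ((i.val + 1) * t + r))
      = ∑ i ∈ Finset.range n, 2 ^ ((i + 1) * t + r) := by
    rw [show n + 1 - 1 = n from rfl]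
    exact Fin.sum_univ_eq_sum_range (fun i => 2 ^ ((i + 1) * t + r)) n
  rw [hfin]
  have hterm : ∀ i, (2:ℕ) ^ ((i + 1) * t + r) = 2 ^ r * (2 ^ t) ^ (i + 1) := by
    intro i
    rw [pow_add, show (i + 1) * t = t * (i + 1) from Nat.mul_comm _ _, pow_mul,
      Nat.mul_comm]
  simp only [hterm]
  rw [← Finset.mul_sum, Nat.mul_add, Nat.mul_one]
  omega

end PSaux

end

/-- Eisfeld–Storme: for p = kt + r with 0 < r < t < p and k ≥ 1, there exists a
partial (t-1)-spread of PG(p-1,2) of size 2^r (2^{kt}-1)/(2^t-1) - 2^r + 1. -/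
theorem partial_spread_exists
    (p t k r : ℕ) (hk : 1 ≤ k) (hr : 0 < r) (hrt : r < t) (htp : t < p)
    (hp : p = k * t + r) :
    ∃ S : Finset (Submodule (ZMod 2) (Fin p → ZMod 2)),
      S.card = 2 ^ r * ((2 ^ (k * t) - 1) / (2 ^ t - 1)) - 2 ^ r + 1 ∧
      (∀ W ∈ S, Module.finrank (ZMod 2) W = t) ∧
      (↑S : Set (Submodule (ZMod 2) (Fin p → ZMod 2))).Pairwise
        (fun W₁ W₂ => W₁ ⊓ W₂ = ⊥) := by
  classical
  -- dimension of level i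
  have hm0 : ∀ i : Fin (k - 1), (i.val + 1) * t + r ≠ 0 := fun i => by omega
  have hmt : ∀ i : Fin (k - 1), t ≤ (i.val + 1) * t + r := by
    intro i
    have h1 : 1 * t ≤ (i.val + 1) * t := Nat.mul_le_mul_right t (by omega)
    omega
  have hmp : ∀ i : Fin (k - 1), ((i.val + 1) * t + r) + t ≤ p := by
    intro i
    have h1 := i.isLt
    have h2 : (i.val + 2) * t = (i.val + 1) * t + t := by ring
    have h3 : (i.val + 2) * t ≤ k * t := Nat.mul_le_mul_right t (by omega)
    omega
  have hmono : ∀ i i' : Fin (k - 1), i.val < i'.val →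
      ((i.val + 1) * t + r) + t ≤ (i'.val + 1) * t + r := by
    intro i i' hlt
    have h2 : (i.val + 2) * t = (i.val + 1) * t + t := by ring
    have h3 : (i.val + 2) * t ≤ (i'.val + 1) * t := Nat.mul_le_mul_right t (by omega)
    omega
  letI instF : ∀ i : Fin (k - 1), Fintype (PSaux.F ((i.val + 1) * t + r)) :=
    fun i => Fintype.ofFinite _
  let I := Option ((i : Fin (k - 1)) × PSaux.F ((i.val + 1) * t + r))
  let Φ : I → Submodule (ZMod 2) (Fin p → ZMod 2) := fun o =>
    Option.elim o (LinearMap.range (PSaux.win p 0 t))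
      (fun s => LinearMap.range (PSaux.gmap p t ((s.1.val + 1) * t + r) (hm0 s.1) s.2))
  have hdisj : ∀ o o' : I, o ≠ o' → Φ o ⊓ Φ o' = ⊥ := by
    have base_lvl : ∀ (i : Fin (k - 1)) (a : PSaux.F ((i.val + 1) * t + r)),
        Φ none ⊓ Φ (some ⟨i, a⟩) = ⊥ := by
      intro i a
      refine PSaux.disj_of t _ _ t ((i.val + 1) * t + r) (hmt i) ?_ ?_
      · exact fun v hv j hj => PSaux.win_range_high hv j (by omega)
      · exact fun v hv h0 => PSaux.gmap_range_det (hmp i) hv h0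
    have lvl_lvl : ∀ (i i' : Fin (k - 1)) (a : PSaux.F ((i.val + 1) * t + r))
        (b : PSaux.F ((i'.val + 1) * t + r)), i.val < i'.val →
        Φ (some ⟨i, a⟩) ⊓ Φ (some ⟨i', b⟩) = ⊥ := by
      intro i i' a b hlt
      refine PSaux.disj_of t _ _ (((i.val + 1) * t + r) + t) ((i'.val + 1) * t + r)
        (hmono i i' hlt) ?_ ?_
      · exact fun v hv j hj => PSaux.gmap_range_high hv j hj
      · exact fun v hv h0 => PSaux.gmap_range_det (hmp i') hv h0
    rintro (_ | ⟨i, a⟩) (_ | ⟨i', b⟩) hne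
    · exact absurd rfl hne
    · exact base_lvl i' b
    · rw [inf_comm]; exact base_lvl i a
    · rcases lt_trichotomy i.val i'.val with hlt | heq | hgt
      · exact lvl_lvl i i' a b hlt
      · have hii : i = i' := Fin.ext heq
        subst hii
        have hab : a ≠ b := by
          intro h; exact hne (by rw [h])
        exact PSaux.same_level (hmp i) (hmt i) hab
      · rw [inf_comm]; exact lvl_lvl i' i b a hgt
  have hrank : ∀ o : I, Module.finrank (ZMod 2) (Φ o) = t := by
    rintro (_ | ⟨i, a⟩)
    · exact (LinearMap.finrank_range_of_inj (PSaux.win_injective (by omega))).trans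
        (Module.finrank_fin_fun _)
    · exact (LinearMap.finrank_range_of_inj (PSaux.gmap_injective (hmp i))).trans
        (Module.finrank_fin_fun _)
  have hinj : Function.Injective Φ := by
    intro o o' h
    by_contra hne
    have hbot := hdisj o o' hne
    rw [h, inf_idem] at hbot
    have hrk := hrank o'
    rw [hbot, finrank_bot] at hrk
    omega
  refine ⟨Finset.image Φ Finset.univ, ?_, ?_, ?_⟩
  · rw [Finset.card_image_of_injective _ hinj, Finset.card_univ]
    have hcard : Fintype.card I = (∑ i : Fin (k - 1), 2 ^ ((i.val + 1) * t + r)) + 1 := by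
      have hFc : ∀ i : Fin (k - 1),
          Fintype.card (PSaux.F ((i.val + 1) * t + r)) = 2 ^ ((i.val + 1) * t + r) := by
        intro i
        rw [← Nat.card_eq_fintype_card, GaloisField.card 2 _ (hm0 i)]
      simp only [I, Fintype.card_option, Fintype.card_sigma, hFc]
    rw [hcard]
    exact PSaux.count t r k hk hr hrt
  · intro W hW
    obtain ⟨o, _, rfl⟩ := Finset.mem_image.mp hW
    exact hrank o
  · intro W₁ h1 W₂ h2 hne
    obtain ⟨o, _, rfl⟩ := Finset.mem_image.mp (Finset.mem_coe.mp h1)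
    obtain ⟨o', _, rfl⟩ := Finset.mem_image.mp (Finset.mem_coe.mp h2)
    exact hdisj o o' (fun h => hne (by rw [h]))
end

section
/- Let p be odd, p = 2k + 1 with k ≥ 1, and t = 2. Then the maximum number of pairwise disjoint 2-dimensional linear subspaces of GF(2)^p (pairwise intersection {0}) is exactly (2^p - 5)/3. -/
open Finset Submodule Module

namespace MaxPLS

variable {V : Type*} [AddCommGroup V] [Module (ZMod 2) V]

lemma zmodCases (c : ZMod 2) : c = 0 ∨ c = 1 := by
  revert c; decide

lemma addSelf (v : V) : v + v = 0 := by
  have h : ((1 : ZMod 2) + 1) = 0 := by decide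
  calc v + v = (1 : ZMod 2) • v + (1 : ZMod 2) • v := by rw [one_smul]
    _ = ((1 : ZMod 2) + 1) • v := (add_smul _ _ _).symm
    _ = 0 := by rw [h, zero_smul]

lemma eq_of_add_eq_zero {a b : V} (h : a + b = 0) : a = b := by
  have := addSelf b
  calc a = a + (b + b) := by rw [this, add_zero]
    _ = (a + b) + b := by rw [add_assoc]
    _ = b := by rw [h, zero_add]

lemma mem_span_pair_iff {a b x : V} :
    x ∈ span (ZMod 2) ({a, b} : Set V) ↔ x = 0 ∨ x = a ∨ x = b ∨ x = a + b := by
  rw [Submodule.mem_span_pair]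
  constructor
  · rintro ⟨c, d, rfl⟩
    rcases zmodCases c with rfl | rfl <;> rcases zmodCases d with rfl | rfl <;>
      simp [one_smul, zero_smul]
  · rintro (rfl | rfl | rfl | rfl)
    exacts [⟨0, 0, by simp⟩, ⟨1, 0, by simp⟩, ⟨0, 1, by simp⟩, ⟨1, 1, by simp⟩]

lemma finrank_span_pair {a b : V} (ha : a ≠ 0) (hb : b ≠ 0) (hab : a ≠ b) :
    Module.finrank (ZMod 2) (span (ZMod 2) ({a, b} : Set V)) = 2 := by
  have hli : LinearIndependent (ZMod 2) ![a, b] := by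
    rw [linearIndependent_fin2]
    refine ⟨by simpa using hb, fun c => ?_⟩
    rcases zmodCases c with rfl | rfl
    · simpa using fun h => ha h.symm
    · simpa using fun h => hab h.symm
  have h2 := finrank_span_eq_card hli
  have hr : Set.range ![a, b] = {a, b} := by
    ext x
    simp [Fin.exists_fin_two]
    tauto
  rw [hr] at h2
  simpa using h2

end MaxPLS

namespace MaxPLS

lemma exists_pair_of_finrank_two {V : Type*} [AddCommGroup V] [Module (ZMod 2) V]
    [FiniteDimensional (ZMod 2) V] {W : Submodule (ZMod 2) V}
    (hW : finrank (ZMod 2) W = 2) :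
    ∃ a b : V, a ≠ 0 ∧ b ≠ 0 ∧ a ≠ b ∧ W = span (ZMod 2) {a, b} := by
  have bb := Module.finBasisOfFinrankEq (ZMod 2) W hW
  refine ⟨bb 0, bb 1, ?_, ?_, ?_, ?_⟩
  · simpa [Submodule.coe_eq_zero] using bb.ne_zero 0
  · simpa [Submodule.coe_eq_zero] using bb.ne_zero 1
  · intro h
    exact (by decide : (0 : Fin 2) ≠ 1) (bb.injective (Subtype.ext h))
  · have h1 : W = Submodule.map W.subtype ⊤ := (Submodule.map_subtype_top W).symm
    rw [← bb.span_eq, Submodule.map_span] at h1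
    have h2 : (W.subtype '' Set.range bb) = {(bb 0 : V), (bb 1 : V)} := by
      rw [← Set.range_comp]
      ext x
      simp [Fin.exists_fin_two]
      tauto
    rw [h2] at h1
    exact h1

lemma sum_univ_zero (p : ℕ) (hp2 : 2 ≤ p) :
    (∑ v : Fin p → ZMod 2, v) = 0 := by
  ext i
  rw [Finset.sum_apply]
  set j : Fin p := if (i : ℕ) = 0 then ⟨1, by omega⟩ else ⟨0, by omega⟩ with hj
  have hji : j ≠ i := by
    intro h
    rcases Nat.eq_zero_or_pos (i : ℕ) with h0 | h0
    · rw [hj] at h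
      simp [h0] at h
      have := congrArg Fin.val h
      simp at this
      omega
    · rw [hj] at h
      have hi0 : ¬ ((i : ℕ) = 0) := by omega
      simp [hi0] at h
      have := congrArg Fin.val h
      simp at this
      omega
  show (∑ v : Fin p → ZMod 2, v i) = (0 : ZMod 2)
  refine Finset.sum_ninvolution (fun v : Fin p → ZMod 2 => v + Pi.single j 1) ?_ ?_ ?_ ?_
  · intro v
    show v i + (v + Pi.single j 1 : Fin p → ZMod 2) i = 0
    have : (v + Pi.single j 1 : Fin p → ZMod 2) i = v i := by
      simp [Pi.single_eq_of_ne hji]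
      exact Pi.single_eq_of_ne hji.symm 1
    rw [this]
    exact addSelf _
  · intro v _
    show v + Pi.single j 1 ≠ v
    intro h
    have := congrFun (left_eq_add.mp h.symm) j
    simp at this
  · intro v; exact Finset.mem_univ _
  · intro v
    show v + Pi.single j 1 + Pi.single j 1 = v
    rw [add_assoc, addSelf, add_zero]

end MaxPLS

namespace MaxPLS

lemma pow_two_odd (k : ℕ) : ∃ t, 2 ^ (2 * k + 1) = 3 * t + 2 := by
  induction k with
  | zero => exact ⟨0, rfl⟩
  | succ n ih =>
    obtain ⟨t, ht⟩ := ih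
    refine ⟨4 * t + 2, ?_⟩
    have : 2 ^ (2 * (n + 1) + 1) = 4 * 2 ^ (2 * n + 1) := by ring
    rw [this, ht]; ring

lemma upper_bound (p : ℕ) (hp2 : 2 ≤ p) (t : ℕ) (ht : 2 ^ p = 3 * t + 2)
    (S : Finset (Submodule (ZMod 2) (Fin p → ZMod 2)))
    (hdim : ∀ W ∈ S, finrank (ZMod 2) W = 2)
    (hdisj : (↑S : Set (Submodule (ZMod 2) (Fin p → ZMod 2))).Pairwise
      (fun W₁ W₂ => W₁ ⊓ W₂ = ⊥)) :
    S.card ≤ (2 ^ p - 5) / 3 := by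
  classical
  set V := (Fin p → ZMod 2) with hV
  let nz : Submodule (ZMod 2) V → Finset V := fun W => univ.filter fun v => v ∈ W ∧ v ≠ 0
  have hmemnz : ∀ W v, v ∈ nz W ↔ (v ∈ W ∧ v ≠ 0) := by
    intro W v; simp [nz]
  have hnz : ∀ W ∈ S, (nz W).card = 3 ∧ (∑ v ∈ nz W, v) = 0 := by
    intro W hW
    obtain ⟨a, b, ha, hb, hab, rfl⟩ := exists_pair_of_finrank_two (hdim W hW)
    have habne : a + b ≠ 0 := fun h => hab (eq_of_add_eq_zero h)
    have haab : a ≠ a + b := fun h => hb (left_eq_add.mp h)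
    have hbab : b ≠ a + b := fun h => ha (right_eq_add.mp h)
    have hset : nz (span (ZMod 2) {a, b}) = {a, b, a + b} := by
      ext x
      rw [hmemnz]
      rw [mem_span_pair_iff]
      constructor
      · rintro ⟨h1 | h1 | h1 | h1, h2⟩
        · exact absurd h1 h2
        · simp [h1]
        · simp [h1]
        · simp [h1]
      · intro h
        simp only [Finset.mem_insert, Finset.mem_singleton] at h
        rcases h with rfl | rfl | rfl
        · exact ⟨Or.inr (Or.inl rfl), ha⟩
        · exact ⟨Or.inr (Or.inr (Or.inl rfl)), hb⟩
        · exact ⟨Or.inr (Or.inr (Or.inr rfl)), habne⟩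
    rw [hset]
    constructor
    · rw [Finset.card_insert_of_notMem (by simp [hab, haab]),
        Finset.card_insert_of_notMem (by simp [hbab])]
      simp
    · rw [Finset.sum_insert (by simp [hab, haab]), Finset.sum_insert (by simp [hbab]),
        Finset.sum_singleton]
      rw [← add_assoc]
      exact addSelf _
  have hdisjnz : ∀ W₁ ∈ S, ∀ W₂ ∈ S, W₁ ≠ W₂ → Disjoint (nz W₁) (nz W₂) := by
    intro W₁ h₁ W₂ h₂ hne
    rw [Finset.disjoint_left]
    intro v hv1 hv2
    rw [hmemnz] at hv1 hv2
    have : v ∈ W₁ ⊓ W₂ := ⟨hv1.1, hv2.1⟩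
    rw [hdisj h₁ h₂ hne] at this
    exact hv1.2 (by simpa using this)
  set C := S.biUnion nz with hC
  have hCcard : C.card = 3 * S.card := by
    rw [hC, Finset.card_biUnion hdisjnz]
    rw [Finset.sum_congr rfl (fun W hW => (hnz W hW).1)]
    simp [Nat.mul_comm]
  have hCsum : (∑ v ∈ C, v) = 0 := by
    rw [hC, Finset.sum_biUnion]
    · rw [Finset.sum_congr rfl (fun W hW => (hnz W hW).2)]
      simp
    · intro W₁ h₁ W₂ h₂ hne
      exact hdisjnz W₁ h₁ W₂ h₂ hne
  set N : Finset V := univ.filter (fun v => v ≠ 0) with hN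
  have hNeq : N = Finset.univ.erase 0 := by
    rw [hN]; ext x; simp [Finset.mem_erase]
  have hNcard : N.card = 2 ^ p - 1 := by
    rw [hNeq, Finset.card_erase_of_mem (Finset.mem_univ _)]
    congr 1
    simp [hV, Fintype.card_fun]
  have hNsum : (∑ v ∈ N, v) = 0 := by
    have h0 := Finset.add_sum_erase (univ : Finset V) (fun v : V => v) (Finset.mem_univ 0)
    rw [hNeq]
    rw [sum_univ_zero p hp2] at h0
    simpa using h0
  have hCN : C ⊆ N := by
    intro v hv
    rw [hC, Finset.mem_biUnion] at hv
    obtain ⟨W, hW, hvW⟩ := hv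
    rw [hmemnz] at hvW
    rw [hN]; simp [hvW.2]
  set H := N \ C with hH
  have hHsum : (∑ v ∈ H, v) = 0 := by
    have := Finset.sum_sdiff (f := fun v : V => v) hCN
    rw [hCsum, add_zero, hNsum] at this
    exact this
  have hHcard : H.card = N.card - C.card := Finset.card_sdiff_of_subset hCN
  have hCleN : C.card ≤ N.card := Finset.card_le_card hCN
  have hH1 : H.card ≠ 1 := by
    intro h1
    obtain ⟨x, hx⟩ := Finset.card_eq_one.mp h1
    have hxH : x ∈ H := by rw [hx]; exact Finset.mem_singleton_self x
    have hxN : x ∈ N := (Finset.sdiff_subset) hxH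
    have hx0 : x ≠ 0 := by rw [hN] at hxN; simpa using hxN
    rw [hx, Finset.sum_singleton] at hHsum
    exact hx0 hHsum
  omega

end MaxPLS

namespace MaxPLS

section Step

variable (m : ℕ) (hm : 2 ≤ m)

def emb (v : Fin m → ZMod 2) : Fin (m + 2) → ZMod 2 :=
  fun j => if h : (j : ℕ) < m then v ⟨j, h⟩ else 0

def embL : (Fin m → ZMod 2) →ₗ[ZMod 2] (Fin (m + 2) → ZMod 2) where
  toFun := emb m
  map_add' := by
    intro x y; funext j; simp only [emb, Pi.add_apply]; split <;> simp
  map_smul' := by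
    intro c x; funext j; simp only [emb, Pi.smul_apply, RingHom.id_apply]; split <;> simp

lemma embL_apply (v : Fin m → ZMod 2) (j : Fin (m + 2)) :
    embL m v j = if h : (j : ℕ) < m then v ⟨j, h⟩ else 0 := rfl

lemma embL_inj : Function.Injective (embL m) := by
  intro v w h
  funext i
  have hc := congrFun h ⟨(i : ℕ), by omega⟩
  rw [embL_apply, embL_apply] at hc
  simpa [i.isLt] using hc

def Mv (v : Fin m → ZMod 2) : Fin m → ZMod 2 := fun i =>
  if h : (i : ℕ) + 1 < m then v ⟨(i : ℕ) + 1, h⟩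
  else v ⟨0, by omega⟩ + v ⟨1, hm⟩

lemma Mv_succ (v : Fin m → ZMod 2) (n : ℕ) (hn : n + 1 < m) :
    Mv m hm v ⟨n, by omega⟩ = v ⟨n + 1, hn⟩ := by
  simp only [Mv, Fin.val_mk]
  rw [dif_pos hn]

lemma Mv_last (v : Fin m → ZMod 2) :
    Mv m hm v ⟨m - 1, by omega⟩ = v ⟨0, by omega⟩ + v ⟨1, hm⟩ := by
  have hlast : ¬ ((m - 1) + 1 < m) := by omega
  simp only [Mv, Fin.val_mk]
  rw [dif_neg hlast]

lemma Mv_add (v w : Fin m → ZMod 2) :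
    Mv m hm (v + w) = Mv m hm v + Mv m hm w := by
  funext i
  simp only [Mv, Pi.add_apply]
  split
  · rfl
  · abel

lemma Mv_inj : Function.Injective (Mv m hm) := by
  intro v w h
  have key : ∀ n (hn : n + 1 < m), v ⟨n + 1, hn⟩ = w ⟨n + 1, hn⟩ := by
    intro n hn
    have hc := congrFun h ⟨n, by omega⟩
    rw [Mv_succ m hm v n hn, Mv_succ m hm w n hn] at hc
    exact hc
  funext i
  rcases Nat.eq_zero_or_pos (i : ℕ) with h0 | h0
  · have hc := congrFun h ⟨m - 1, by omega⟩
    rw [Mv_last, Mv_last] at hc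
    have h1 : v ⟨1, hm⟩ = w ⟨1, hm⟩ := key 0 (by omega)
    rw [h1] at hc
    have h0' : v ⟨0, by omega⟩ = w ⟨0, by omega⟩ := by
      exact add_right_cancel hc
    have : i = ⟨0, by omega⟩ := by ext; simpa using h0
    rw [this]; exact h0'
  · have : i = ⟨((i : ℕ) - 1) + 1, by omega⟩ := by ext; simp; omega
    rw [this]
    exact key _ _

lemma addMv_inj : Function.Injective (fun v => v + Mv m hm v) := by
  intro v w h
  simp only at h
  set d := v + w with hd
  have hMd : d + Mv m hm d = 0 := by
    rw [hd, Mv_add]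
    calc (v + w) + (Mv m hm v + Mv m hm w) = (v + Mv m hm v) + (w + Mv m hm w) := by abel
      _ = (w + Mv m hm w) + (w + Mv m hm w) := by rw [h]
      _ = 0 := addSelf _
  have hfix : ∀ i, d i = Mv m hm d i := by
    intro i
    have := congrFun hMd i
    exact eq_of_add_eq_zero this
  have hconst : ∀ n (hn : n < m), d ⟨n, hn⟩ = d ⟨0, by omega⟩ := by
    intro n
    induction n with
    | zero => intro hn; rfl
    | succ k ih =>
      intro hn
      have h1 := hfix ⟨k, by omega⟩
      rw [Mv_succ m hm d k hn] at h1
      rw [← h1]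
      exact ih (by omega)
  have hzero : d ⟨0, by omega⟩ = 0 := by
    have h1 := hfix ⟨m - 1, by omega⟩
    rw [Mv_last] at h1
    rw [hconst (m - 1) (by omega), hconst 1 hm] at h1
    have := left_eq_add.mp h1
    exact right_eq_add.mp h1
  have hdz : d = 0 := by
    funext i
    have : i = ⟨(i : ℕ), i.isLt⟩ := by ext; rfl
    rw [this, hconst (i : ℕ) i.isLt, hzero]
    rfl
  have : v + w = 0 := by rw [← hd]; exact hdz
  exact eq_of_add_eq_zero this

def Av (v : Fin m → ZMod 2) : Fin (m + 2) → ZMod 2 :=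
  fun j => if h : (j : ℕ) < m then v ⟨j, h⟩ else if (j : ℕ) = m then 1 else 0

def Bv (v : Fin m → ZMod 2) : Fin (m + 2) → ZMod 2 :=
  fun j => if h : (j : ℕ) < m then Mv m hm v ⟨j, h⟩ else if (j : ℕ) = m then 0 else 1

lemma Av_m (v : Fin m → ZMod 2) : Av m v ⟨m, by omega⟩ = 1 := by simp [Av]

lemma Av_m1 (v : Fin m → ZMod 2) : Av m v ⟨m + 1, by omega⟩ = 0 := by simp [Av]

lemma Bv_m (v : Fin m → ZMod 2) : Bv m hm v ⟨m, by omega⟩ = 0 := by simp [Bv]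

lemma Bv_m1 (v : Fin m → ZMod 2) : Bv m hm v ⟨m + 1, by omega⟩ = 1 := by simp [Bv]

lemma Av_lt (v : Fin m → ZMod 2) (j : ℕ) (hj : j < m) :
    Av m v ⟨j, by omega⟩ = v ⟨j, hj⟩ := by simp [Av, hj]

lemma Bv_lt (v : Fin m → ZMod 2) (j : ℕ) (hj : j < m) :
    Bv m hm v ⟨j, by omega⟩ = Mv m hm v ⟨j, hj⟩ := by simp [Bv, hj]

lemma Av_ne_zero (v : Fin m → ZMod 2) : Av m v ≠ 0 := by
  intro h
  have := congrFun h ⟨m, by omega⟩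
  rw [Av_m] at this
  simp at this

lemma Bv_ne_zero (v : Fin m → ZMod 2) : Bv m hm v ≠ 0 := by
  intro h
  have := congrFun h ⟨m + 1, by omega⟩
  rw [Bv_m1] at this
  simp at this

lemma Av_ne_Bv (v w : Fin m → ZMod 2) : Av m v ≠ Bv m hm w := by
  intro h
  have := congrFun h ⟨m, by omega⟩
  rw [Av_m, Bv_m] at this
  simp at this

lemma Av_inj : Function.Injective (Av m) := by
  intro v w h
  funext i
  have hc := congrFun h ⟨(i : ℕ), by omega⟩
  rw [Av_lt m v _ i.isLt, Av_lt m w _ i.isLt] at hc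
  simpa using hc

end Step

end MaxPLS

namespace MaxPLS

section Step2

variable (m : ℕ) (hm : 2 ≤ m)

lemma Bv_inj : Function.Injective (Bv m hm) := by
  intro v w h
  apply Mv_inj m hm
  funext i
  have hc := congrFun h ⟨(i : ℕ), by omega⟩
  rw [Bv_lt m hm v _ i.isLt, Bv_lt m hm w _ i.isLt] at hc
  simpa using hc

lemma AvBv_inj : Function.Injective (fun v => Av m v + Bv m hm v) := by
  intro v w h
  simp only at h
  apply addMv_inj m hm
  show v + Mv m hm v = w + Mv m hm w
  funext i
  have hc := congrFun h ⟨(i : ℕ), by omega⟩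
  rw [Pi.add_apply, Pi.add_apply, Av_lt m v _ i.isLt, Av_lt m w _ i.isLt,
    Bv_lt m hm v _ i.isLt, Bv_lt m hm w _ i.isLt] at hc
  simp only [Pi.add_apply]
  simpa using hc

def Lv (v : Fin m → ZMod 2) : Submodule (ZMod 2) (Fin (m + 2) → ZMod 2) :=
  span (ZMod 2) {Av m v, Bv m hm v}

lemma Lv_finrank (v : Fin m → ZMod 2) : finrank (ZMod 2) (Lv m hm v) = 2 :=
  finrank_span_pair (Av_ne_zero m v) (Bv_ne_zero m hm v) (Av_ne_Bv m hm v v)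

lemma mem_Lv_iff (v : Fin m → ZMod 2) (x : Fin (m + 2) → ZMod 2) :
    x ∈ Lv m hm v ↔ x = 0 ∨ x = Av m v ∨ x = Bv m hm v ∨ x = Av m v + Bv m hm v :=
  mem_span_pair_iff

lemma Av_mem_Lv (v : Fin m → ZMod 2) : Av m v ∈ Lv m hm v :=
  subset_span (Set.mem_insert _ _)

lemma Lv_disj (v w : Fin m → ZMod 2) (hvw : v ≠ w) : Lv m hm v ⊓ Lv m hm w = ⊥ := by
  rw [eq_bot_iff]
  intro x hx
  rw [Submodule.mem_inf] at hx
  obtain ⟨h1, h2⟩ := hx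
  rw [mem_Lv_iff] at h1 h2
  rw [Submodule.mem_bot]
  rcases h1 with rfl | rfl | rfl | rfl
  · rfl
  · exfalso
    rcases h2 with h | h | h | h
    · exact Av_ne_zero m v h
    · exact hvw (Av_inj m h)
    · exact Av_ne_Bv m hm v w h
    · have hc := congrFun h ⟨m + 1, by omega⟩
      rw [Av_m1, Pi.add_apply, Av_m1, Bv_m1] at hc
      simp at hc
  · exfalso
    rcases h2 with h | h | h | h
    · exact Bv_ne_zero m hm v h
    · exact Av_ne_Bv m hm w v h.symm
    · exact hvw (Bv_inj m hm h)
    · have hc := congrFun h ⟨m, by omega⟩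
      rw [Bv_m, Pi.add_apply, Av_m, Bv_m] at hc
      simp at hc
  · exfalso
    rcases h2 with h | h | h | h
    · have hc := congrFun h ⟨m, by omega⟩
      rw [Pi.add_apply, Av_m, Bv_m] at hc
      simp at hc
    · have hc := congrFun h ⟨m + 1, by omega⟩
      rw [Pi.add_apply, Av_m1, Bv_m1, Av_m1] at hc
      simp at hc
    · have hc := congrFun h ⟨m, by omega⟩
      rw [Pi.add_apply, Av_m, Bv_m, Bv_m] at hc
      simp at hc
    · exact hvw (AvBv_inj m hm h)

lemma mem_map_coord (W' : Submodule (ZMod 2) (Fin m → ZMod 2))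
    (x : Fin (m + 2) → ZMod 2) (hx : x ∈ W'.map (embL m)) (j : Fin (m + 2))
    (hj : m ≤ (j : ℕ)) : x j = 0 := by
  obtain ⟨y, _, rfl⟩ := hx
  rw [embL_apply]
  rw [dif_neg (by omega)]

lemma map_Lv_disj (W' : Submodule (ZMod 2) (Fin m → ZMod 2)) (v : Fin m → ZMod 2) :
    W'.map (embL m) ⊓ Lv m hm v = ⊥ := by
  rw [eq_bot_iff]
  intro x hx
  rw [Submodule.mem_inf] at hx
  obtain ⟨h1, h2⟩ := hx
  rw [mem_Lv_iff] at h2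
  rw [Submodule.mem_bot]
  rcases h2 with rfl | rfl | rfl | rfl
  · rfl
  · exfalso
    have := mem_map_coord m W' _ h1 ⟨m, by omega⟩ (by simp)
    rw [Av_m] at this
    simp at this
  · exfalso
    have := mem_map_coord m W' _ h1 ⟨m + 1, by omega⟩ (by simp)
    rw [Bv_m1] at this
    simp at this
  · exfalso
    have := mem_map_coord m W' _ h1 ⟨m, by omega⟩ (by simp)
    rw [Pi.add_apply, Av_m, Bv_m] at this
    simp at this

lemma Lv_ne_map (W' : Submodule (ZMod 2) (Fin m → ZMod 2)) (v : Fin m → ZMod 2) :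
    W'.map (embL m) ≠ Lv m hm v := by
  intro h
  have hA : Av m v ∈ W'.map (embL m) := by rw [h]; exact Av_mem_Lv m hm v
  have := mem_map_coord m W' _ hA ⟨m, by omega⟩ (by simp)
  rw [Av_m] at this
  simp at this

lemma Lv_inj : Function.Injective (Lv m hm) := by
  intro v w h
  by_contra hvw
  have hd := Lv_disj m hm v w hvw
  rw [h, inf_idem] at hd
  have := Av_mem_Lv m hm w
  rw [hd, Submodule.mem_bot] at this
  exact Av_ne_zero m w this

end Step2

end MaxPLS

namespace MaxPLS

lemma step (m : ℕ) (hm : 2 ≤ m)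
    (S : Finset (Submodule (ZMod 2) (Fin m → ZMod 2)))
    (hdim : ∀ W ∈ S, finrank (ZMod 2) W = 2)
    (hdisj : (↑S : Set (Submodule (ZMod 2) (Fin m → ZMod 2))).Pairwise
      (fun W₁ W₂ => W₁ ⊓ W₂ = ⊥)) :
    ∃ T : Finset (Submodule (ZMod 2) (Fin (m + 2) → ZMod 2)),
      T.card = S.card + 2 ^ m ∧
      (∀ W ∈ T, finrank (ZMod 2) W = 2) ∧
      (↑T : Set (Submodule (ZMod 2) (Fin (m + 2) → ZMod 2))).Pairwise
        (fun W₁ W₂ => W₁ ⊓ W₂ = ⊥) := by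
  classical
  set T₁ := S.image (Submodule.map (embL m)) with hT₁
  set T₂ := (univ : Finset (Fin m → ZMod 2)).image (Lv m hm) with hT₂
  have hmemT₁ : ∀ W, W ∈ T₁ ↔ ∃ W' ∈ S, W'.map (embL m) = W := by intro W; simp [hT₁]
  have hmemT₂ : ∀ W, W ∈ T₂ ↔ ∃ v, Lv m hm v = W := by intro W; simp [hT₂]
  refine ⟨T₁ ∪ T₂, ?_, ?_, ?_⟩
  · rw [Finset.card_union_of_disjoint]
    · rw [hT₁, hT₂,
        Finset.card_image_of_injective _ (Submodule.map_injective_of_injective (embL_inj m)),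
        Finset.card_image_of_injective _ (Lv_inj m hm)]
      congr 1
      rw [Finset.card_univ]
      simp
    · rw [Finset.disjoint_left]
      intro W hW1 hW2
      rw [hmemT₁] at hW1
      rw [hmemT₂] at hW2
      obtain ⟨W', _, rfl⟩ := hW1
      obtain ⟨v, hv⟩ := hW2
      exact Lv_ne_map m hm W' v hv.symm
  · intro W hW
    rcases Finset.mem_union.mp hW with h | h
    · rw [hmemT₁] at h
      obtain ⟨W', hW', rfl⟩ := h
      rw [← LinearEquiv.finrank_eq
        (Submodule.equivMapOfInjective (embL m) (embL_inj m) W')]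
      exact hdim W' hW'
    · rw [hmemT₂] at h
      obtain ⟨v, rfl⟩ := h
      exact Lv_finrank m hm v
  · intro W₁ h₁ W₂ h₂ hne
    simp only [Finset.coe_union, Set.mem_union, Finset.mem_coe] at h₁ h₂
    rcases h₁ with h₁ | h₁ <;> rcases h₂ with h₂ | h₂
    · rw [hmemT₁] at h₁ h₂
      obtain ⟨W₁', hW₁', rfl⟩ := h₁
      obtain ⟨W₂', hW₂', rfl⟩ := h₂
      have hne' : W₁' ≠ W₂' := fun h => hne (by rw [h])
      rw [← Submodule.map_inf _ (embL_inj m), hdisj hW₁' hW₂' hne', Submodule.map_bot]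
    · rw [hmemT₁] at h₁
      rw [hmemT₂] at h₂
      obtain ⟨W', _, rfl⟩ := h₁
      obtain ⟨v, rfl⟩ := h₂
      exact map_Lv_disj m hm W' v
    · rw [hmemT₂] at h₁
      rw [hmemT₁] at h₂
      obtain ⟨v, rfl⟩ := h₁
      obtain ⟨W', _, rfl⟩ := h₂
      rw [inf_comm]
      exact map_Lv_disj m hm W' v
    · rw [hmemT₂] at h₁
      rw [hmemT₂] at h₂
      obtain ⟨v, rfl⟩ := h₁
      obtain ⟨w, rfl⟩ := h₂
      exact Lv_disj m hm v w (fun h => hne (by rw [h]))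

end MaxPLS

namespace MaxPLS

lemma pow_two_odd_ge (k : ℕ) (hk : 1 ≤ k) : ∃ t, 2 ^ (2 * k + 1) = 3 * t + 8 := by
  induction k with
  | zero => exact absurd hk (by omega)
  | succ n ih =>
    rcases Nat.eq_zero_or_pos n with rfl | hn
    · exact ⟨0, rfl⟩
    · obtain ⟨t, ht⟩ := ih hn
      refine ⟨4 * t + 8, ?_⟩
      have h2 : 2 ^ (2 * (n + 1) + 1) = 4 * 2 ^ (2 * n + 1) := by ring
      rw [h2, ht]; ring

lemma exists_spread (k : ℕ) (hk : 1 ≤ k) :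
    ∃ S : Finset (Submodule (ZMod 2) (Fin (2 * k + 1) → ZMod 2)),
      S.card = (2 ^ (2 * k + 1) - 5) / 3 ∧
      (∀ W ∈ S, finrank (ZMod 2) W = 2) ∧
      (↑S : Set (Submodule (ZMod 2) (Fin (2 * k + 1) → ZMod 2))).Pairwise
        (fun W₁ W₂ => W₁ ⊓ W₂ = ⊥) := by
  induction k with
  | zero => exact absurd hk (by omega)
  | succ n ih =>
    rcases Nat.eq_zero_or_pos n with rfl | hn
    · classical
      set a : Fin 3 → ZMod 2 := Pi.single 0 1 with ha
      set b : Fin 3 → ZMod 2 := Pi.single 1 1 with hb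
      have ha0 : a ≠ 0 := by
        intro h
        have := congrFun h 0
        simp [ha] at this
      have hb0 : b ≠ 0 := by
        intro h
        have := congrFun h 1
        simp [hb] at this
      have hab : a ≠ b := by
        intro h
        have := congrFun h 0
        simp [ha, hb, Pi.single_eq_of_ne (by decide : (0 : Fin 3) ≠ 1)] at this
      refine ⟨{span (ZMod 2) {a, b}}, ?_, ?_, ?_⟩
      · simp
      · intro W hW
        rw [Finset.mem_singleton] at hW
        subst hW
        exact finrank_span_pair ha0 hb0 hab
      · simp [Set.pairwise_singleton]
    · obtain ⟨S, hcard, hdim, hdisj⟩ := ih hn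
      obtain ⟨T, hTcard, hTdim, hTdisj⟩ := step (2 * n + 1) (by omega) S hdim hdisj
      refine ⟨T, ?_, hTdim, hTdisj⟩
      rw [hTcard, hcard]
      obtain ⟨t, ht⟩ := pow_two_odd_ge n hn
      have h2 : 2 ^ (2 * (n + 1) + 1) = 4 * 2 ^ (2 * n + 1) := by ring
      omega

end MaxPLS


/-- For odd p = 2k+1, the maximum number of pairwise disjoint 2-dimensional
subspaces of GF(2)^p is exactly (2^p - 5)/3. -/
theorem max_partial_line_spread
    (p k : ℕ) (hk : 1 ≤ k) (hp : p = 2 * k + 1) :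
    IsGreatest
      {n : ℕ | ∃ S : Finset (Submodule (ZMod 2) (Fin p → ZMod 2)),
        S.card = n ∧
        (∀ W ∈ S, Module.finrank (ZMod 2) W = 2) ∧
        (↑S : Set (Submodule (ZMod 2) (Fin p → ZMod 2))).Pairwise
          (fun W₁ W₂ => W₁ ⊓ W₂ = ⊥)}
      ((2 ^ p - 5) / 3) := by
  subst hp
  constructor
  · obtain ⟨S, hcard, hdim, hdisj⟩ := MaxPLS.exists_spread k hk
    exact ⟨S, hcard, hdim, hdisj⟩
  · rintro n ⟨S, rfl, hdim, hdisj⟩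
    obtain ⟨t, ht⟩ := MaxPLS.pow_two_odd k
    exact MaxPLS.upper_bound (2 * k + 1) (by omega) t ht S hdim hdisj
end

section
/- Let X be an n × n real matrix with X^T X = n·I_n, and Σ_y = σ²·I_n + Σ_{i=1}^m σ_i²·N_i N_i^T where each N_i is an n × 2^{t_i} zero-one incidence matrix with exactly one 1 per row and n_i = n/2^{t_i} ones per column. Suppose columns c_j and c_k of X (j ≠ k) satisfy: for each i, either c_j^T N_i = 0 or c_j = N_i a_j^{(i)} for some vector a_j^{(i)} (and similarly for c_k). Then the (j,k) entry of X^T Σ_y X equals 0; i.e., the estimators of distinct factorial effects are uncorrelated. -/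
open Matrix

lemma NtN_eq {n q : ℕ} (N : Matrix (Fin n) (Fin q) ℝ)
    (h01 : ∀ r l, N r l = 0 ∨ N r l = 1)
    (hrow : ∀ r, ∃! l, N r l = 1)
    (c : ℕ)
    (hcol : ∀ l, Nat.card {r : Fin n // N r l = 1} = c) :
    Nᵀ * N = (c : ℝ) • 1 := by
  ext l l'
  simp only [Matrix.mul_apply, Matrix.transpose_apply, Matrix.smul_apply,
    Matrix.one_apply, smul_eq_mul]
  by_cases h : l = l'
  · subst h
    simp only [if_pos rfl, mul_one]
    have e : ∀ r ∈ Finset.univ, N r l * N r l = if N r l = 1 then (1:ℝ) else 0 := by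
      intro r _
      rcases h01 r l with h | h <;> simp [h]
    rw [Finset.sum_congr rfl e, Finset.sum_boole]
    rw [← hcol l, Nat.card_eq_fintype_card, Fintype.card_subtype]; simp
  · simp only [if_neg h, mul_zero]
    refine Finset.sum_eq_zero fun r _ => ?_
    obtain ⟨l0, hl0, huniq⟩ := hrow r
    rcases h01 r l with h1 | h1
    · simp [h1]
    · rcases h01 r l' with h2 | h2
      · simp [h2]
      · exact absurd ((huniq l h1).trans (huniq l' h2).symm) h

/-- Theorem 1: in a single-replicate factorial design with randomization
restrictions, the estimators of distinct factorial effects are uncorrelated: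
the (j,k) entry of Xᵀ Σ_y X is zero. -/
theorem effect_estimators_uncorrelated
    (n m : ℕ) (t : Fin m → ℕ)
    (X : Matrix (Fin n) (Fin n) ℝ)
    (hX : Xᵀ * X = (n : ℝ) • (1 : Matrix (Fin n) (Fin n) ℝ))
    (N : (i : Fin m) → Matrix (Fin n) (Fin (2 ^ t i)) ℝ)
    (h01 : ∀ i r l, N i r l = 0 ∨ N i r l = 1)
    (hrow : ∀ i (r : Fin n), ∃! l, N i r l = 1)
    (hcol : ∀ i (l : Fin (2 ^ t i)),
      Nat.card {r : Fin n // N i r l = 1} = n / 2 ^ t i)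
    (σ : ℝ) (σi : Fin m → ℝ)
    (Sy : Matrix (Fin n) (Fin n) ℝ)
    (hSy : Sy = σ ^ 2 • (1 : Matrix (Fin n) (Fin n) ℝ) +
      ∑ i : Fin m, σi i ^ 2 • (N i * (N i)ᵀ))
    (j k : Fin n) (hjk : j ≠ k)
    (hj : ∀ i : Fin m,
      (fun r => X r j) ᵥ* N i = 0 ∨ ∃ a, (fun r => X r j) = N i *ᵥ a)
    (hk : ∀ i : Fin m,
      (fun r => X r k) ᵥ* N i = 0 ∨ ∃ a, (fun r => X r k) = N i *ᵥ a) :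
    (Xᵀ * Sy * X) j k = 0 := by
  -- orthogonality of the two columns
  have hcjk : (fun r => X r j) ⬝ᵥ (fun r => X r k) = 0 := by
    have := congrFun (congrFun hX j) k
    simp only [Matrix.mul_apply, Matrix.transpose_apply, Matrix.smul_apply,
      Matrix.one_apply, if_neg hjk, smul_eq_mul, mul_zero] at this
    simpa [dotProduct] using this
  -- entry of each middle term
  have key : ∀ i : Fin m, (Xᵀ * (N i * (N i)ᵀ) * X) j k
      = ((fun r => X r j) ᵥ* N i) ⬝ᵥ ((fun r => X r k) ᵥ* N i) := by
    intro i
    rw [show Xᵀ * (N i * (N i)ᵀ) * X = (Xᵀ * N i) * ((N i)ᵀ * X) by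
      rw [Matrix.mul_assoc, Matrix.mul_assoc, Matrix.mul_assoc]]
    simp only [Matrix.mul_apply, Matrix.transpose_apply, dotProduct,
      Matrix.vecMul, Pi.zero_apply]
    exact Finset.sum_congr rfl fun l _ => by rw [Finset.sum_congr rfl fun r _ => mul_comm (N i r l) (X r k)]
  have hterm : ∀ i : Fin m, (Xᵀ * (N i * (N i)ᵀ) * X) j k = 0 := by
    intro i
    rcases hj i with hz | ⟨a, ha⟩
    · rw [key i, hz, zero_dotProduct]
    rcases hk i with hz | ⟨b, hb⟩
    · rw [key i, hz, dotProduct_zero]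
    have hN : (N i)ᵀ * N i = ((n / 2 ^ t i : ℕ) : ℝ) • 1 :=
      NtN_eq (N i) (h01 i) (hrow i) _ (hcol i)
    have hvj : (fun r => X r j) ᵥ* N i = ((n / 2 ^ t i : ℕ) : ℝ) • a := by
      rw [ha, ← Matrix.mulVec_transpose, Matrix.mulVec_mulVec, hN]
      simp [Matrix.smul_mulVec]
    rw [key i, hvj, smul_dotProduct, ← Matrix.mulVec_transpose,
      Matrix.dotProduct_mulVec, Matrix.vecMul_transpose, ← ha, hcjk,
      smul_zero]
  -- assemble
  subst hSy
  rw [Matrix.mul_add, Matrix.add_mul, Matrix.mul_smul, Matrix.smul_mul,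
    Matrix.mul_one, Matrix.mul_sum, Matrix.sum_mul]
  simp only [Matrix.add_apply, Matrix.smul_apply, Matrix.sum_apply, hX]
  rw [Finset.sum_congr rfl (fun i _ => by
    rw [Matrix.mul_smul, Matrix.smul_mul, Matrix.smul_apply, hterm i, smul_zero])]
  simp [Matrix.one_apply, hjk]
end

section
/- Let X be n × n with X^T X = n·I_n, and Σ_y = σ²·I_n + Σ_{i=1}^m σ_i²·N_i N_i^T with N_i as incidence matrices (one 1 per row, n_i = n/2^{t_i} ones per column). Let c be a column of X and T = {i : c lies in the column space of N_i} with c^T N_i = 0 for all i ∉ T. Then (1/n²)·c^T Σ_y c = σ²/n + Σ_{i∈T} (n_i/n)·σ_i². In particular, if T is empty the variance is σ²/n. -/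
open Matrix

/-- Theorem 2: the variance of the least squares estimator of a factorial
effect E with column c equals σ²/n plus the sum of (n_i/n)σ_i² over the stages
i whose RDCSS contains E. -/
theorem effect_estimator_variance
    (n m : ℕ) (hn : 0 < n) (t : Fin m → ℕ)
    (X : Matrix (Fin n) (Fin n) ℝ)
    (hX : Xᵀ * X = (n : ℝ) • (1 : Matrix (Fin n) (Fin n) ℝ))
    (N : (i : Fin m) → Matrix (Fin n) (Fin (2 ^ t i)) ℝ)
    (h01 : ∀ i r l, N i r l = 0 ∨ N i r l = 1)
    (hrow : ∀ i (r : Fin n), ∃! l, N i r l = 1)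
    (hcol : ∀ i (l : Fin (2 ^ t i)),
      Nat.card {r : Fin n // N i r l = 1} = n / 2 ^ t i)
    (σ : ℝ) (σi : Fin m → ℝ)
    (Sy : Matrix (Fin n) (Fin n) ℝ)
    (hSy : Sy = σ ^ 2 • (1 : Matrix (Fin n) (Fin n) ℝ) +
      ∑ i : Fin m, σi i ^ 2 • (N i * (N i)ᵀ))
    (j : Fin n) (c : Fin n → ℝ) (hc : c = fun r => X r j)
    (T : Finset (Fin m))
    (hT : ∀ i ∈ T, ∃ a, c = N i *ᵥ a)
    (hT' : ∀ i ∉ T, c ᵥ* N i = 0) :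
    (1 / (n : ℝ) ^ 2) * (c ⬝ᵥ (Sy *ᵥ c)) =
      σ ^ 2 / n + ∑ i ∈ T, ((n / 2 ^ t i : ℕ) / (n : ℝ)) * σi i ^ 2 := by
  have hn' : (n : ℝ) ≠ 0 := Nat.cast_ne_zero.mpr hn.ne'
  -- c ⬝ c = n
  have hcc : c ⬝ᵥ c = (n : ℝ) := by
    have h := congrFun (congrFun hX j) j
    simp only [Matrix.mul_apply, Matrix.transpose_apply, Matrix.smul_apply,
      Matrix.one_apply_eq, smul_eq_mul, mul_one] at h
    subst hc
    simpa [dotProduct] using h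
  -- N i ᵀ * N i = n_i • 1
  have hNtN : ∀ i, (N i)ᵀ * N i =
      ((n / 2 ^ t i : ℕ) : ℝ) • (1 : Matrix (Fin (2 ^ t i)) (Fin (2 ^ t i)) ℝ) := by
    intro i
    ext l l'
    have hterm : ∀ r : Fin n,
        N i r l * N i r l' = if N i r l = 1 ∧ N i r l' = 1 then 1 else 0 := by
      intro r
      rcases h01 i r l with h1 | h1 <;> rcases h01 i r l' with h2 | h2 <;>
        simp [h1, h2]
    rw [Matrix.mul_apply]
    simp only [Matrix.transpose_apply]
    rw [Finset.sum_congr rfl fun r _ => hterm r]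
    by_cases hll : l = l'
    · subst hll
      have hcard : (Finset.univ.filter (fun r : Fin n => N i r l = 1)).card
          = n / 2 ^ t i := by
        rw [← hcol i l, Nat.card_eq_fintype_card, Fintype.card_subtype]
      simp only [and_self, Finset.sum_boole]
      rw [hcard]
      simp
    · have hemp : ∀ r : Fin n, ¬(N i r l = 1 ∧ N i r l' = 1) := by
        rintro r ⟨h1, h2⟩
        exact hll ((hrow i r).unique h1 h2)
      simp [hemp, Matrix.one_apply, hll]
  -- value of each quadratic form
  have hquad : ∀ i : Fin m, c ⬝ᵥ ((N i * (N i)ᵀ) *ᵥ c) =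
      if i ∈ T then ((n / 2 ^ t i : ℕ) : ℝ) * n else 0 := by
    intro i
    by_cases hiT : i ∈ T
    · obtain ⟨a, ha⟩ := hT i hiT
      have h1 : (N i * (N i)ᵀ) *ᵥ c = ((n / 2 ^ t i : ℕ) : ℝ) • c := by
        rw [ha, Matrix.mulVec_mulVec, Matrix.mul_assoc, hNtN i, Matrix.mul_smul,
          Matrix.mul_one, Matrix.smul_mulVec]
      rw [h1, dotProduct_smul, smul_eq_mul, hcc]
      simp [hiT]
    · have h0 : (N i)ᵀ *ᵥ c = 0 := by
        rw [Matrix.mulVec_transpose, hT' i hiT]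
      rw [← Matrix.mulVec_mulVec, h0]
      simp [hiT]
  subst hSy
  rw [Matrix.add_mulVec, dotProduct_add, Matrix.smul_mulVec, Matrix.one_mulVec,
    dotProduct_smul, smul_eq_mul, hcc]
  have hsum : c ⬝ᵥ ((∑ i : Fin m, σi i ^ 2 • (N i * (N i)ᵀ)) *ᵥ c)
      = ∑ i ∈ T, σi i ^ 2 * (((n / 2 ^ t i : ℕ) : ℝ) * n) := by
    have hsmv : (∑ i : Fin m, σi i ^ 2 • (N i * (N i)ᵀ)) *ᵥ c
        = ∑ i : Fin m, (σi i ^ 2 • (N i * (N i)ᵀ)) *ᵥ c := by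
      ext r
      simp only [Matrix.mulVec, dotProduct, Matrix.sum_apply, Finset.sum_mul,
        Finset.sum_apply]
      rw [Finset.sum_comm]
    have hdps : c ⬝ᵥ (∑ i : Fin m, (σi i ^ 2 • (N i * (N i)ᵀ)) *ᵥ c)
        = ∑ i : Fin m, c ⬝ᵥ ((σi i ^ 2 • (N i * (N i)ᵀ)) *ᵥ c) := by
      simp only [dotProduct, Finset.sum_apply, Finset.mul_sum]
      rw [Finset.sum_comm]
    rw [hsmv, hdps]
    rw [← Finset.sum_subset (Finset.subset_univ T)]
    · refine Finset.sum_congr rfl fun i hi => ?_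
      rw [Matrix.smul_mulVec, dotProduct_smul, smul_eq_mul, hquad i, if_pos hi]
    · intro i _ hi
      rw [Matrix.smul_mulVec, dotProduct_smul, smul_eq_mul, hquad i, if_neg hi,
        mul_zero]
  rw [hsum, mul_add, Finset.mul_sum]
  congr 1
  · field_simp
  · refine Finset.sum_congr rfl fun i _ => ?_
    field_simp
end

section
/- Let w be a primitive element of GF(2^p) so that the nonzero elements are w^0, w^1, ..., w^{2^p-2}, and suppose t divides p; set N = (2^p - 1)/(2^t - 1). Then for each j ∈ {0, 1, ..., N-1}, the set S_j = {w^{iN + j} : 0 ≤ i ≤ 2^t - 2} ∪ {0} is a t-dimensional GF(2)-linear subspace of GF(2^p), and the S_j for distinct j intersect only in 0. -/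
/-- Cyclic construction of a (t-1)-spread: if w is a primitive element of
GF(2^p), t ∣ p and N = (2^p-1)/(2^t-1), then each set
S_j = {w^{iN+j} : 0 ≤ i ≤ 2^t - 2} ∪ {0} is a t-dimensional GF(2)-subspace of
GF(2^p), and for distinct j the S_j intersect only in 0. -/
theorem cyclic_spread_construction
    (p t : ℕ) (ht : 0 < t) (hdvd : t ∣ p)
    (F : Type) [Field F] [Fintype F] [CharP F 2]
    (hF : Fintype.card F = 2 ^ p)
    (w : F) (hw : ∀ x : F, x ≠ 0 → ∃ i : ℕ, w ^ i = x)
    (N : ℕ) (hN : N = (2 ^ p - 1) / (2 ^ t - 1)) :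
    letI : Algebra (ZMod 2) F := ZMod.algebra F 2
    (∀ j < N, ∃ W : Submodule (ZMod 2) F,
        (W : Set F) = insert 0 {x : F | ∃ i ≤ 2 ^ t - 2, x = w ^ (i * N + j)} ∧
        Module.finrank (ZMod 2) W = t) ∧
    (∀ j < N, ∀ j' < N, j ≠ j' →
        insert 0 {x : F | ∃ i ≤ 2 ^ t - 2, x = w ^ (i * N + j)} ∩
          insert 0 {x : F | ∃ i ≤ 2 ^ t - 2, x = w ^ (i * N + j')} = {0}) := by
  letI : Algebra (ZMod 2) F := ZMod.algebra F 2
  haveI : Fact (Nat.Prime 2) := ⟨Nat.prime_two⟩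
  set q : ℕ := 2 ^ t with hqdef
  have hq2 : 2 ≤ q := by
    calc 2 = 2 ^ 1 := (pow_one 2).symm
    _ ≤ 2 ^ t := Nat.pow_le_pow_right (by norm_num) ht
  have hp1 : 1 ≤ p := by
    by_contra h
    have hp0 : p = 0 := by omega
    have h1 : Fintype.card F = 1 := by rw [hF, hp0, pow_zero]
    have h2 : 1 < Fintype.card F := Fintype.one_lt_card
    omega
  have hM0 : 0 < 2 ^ p - 1 := by
    have : 2 ^ 1 ≤ 2 ^ p := Nat.pow_le_pow_right (by norm_num) hp1
    omega
  set M : ℕ := 2 ^ p - 1 with hMdef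
  have hdvdM : (q - 1) ∣ M := by
    obtain ⟨k, hk⟩ := hdvd
    have hpow : (2 ^ t) ^ k = 2 ^ p := by rw [← pow_mul, ← hk]
    have h1 : q - 1 ∣ q ^ k - 1 ^ k := Nat.sub_dvd_pow_sub_pow q 1 k
    rwa [one_pow, hqdef, hpow] at h1
  have hNM : N * (q - 1) = M := by rw [hN]; exact Nat.div_mul_cancel hdvdM
  have hN0 : 0 < N := by
    rcases Nat.eq_zero_or_pos N with h | h
    · rw [h, zero_mul] at hNM; omega
    · exact h
  by_cases hw0 : w = 0
  · -- degenerate case: w = 0, which forces card F = 2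
    have hall : ∀ x : F, x = 0 ∨ x = 1 := by
      intro x
      by_cases hx : x = 0
      · exact Or.inl hx
      · obtain ⟨i, hi⟩ := hw x hx
        rcases Nat.eq_zero_or_pos i with h0 | h0
        · right; rw [← hi, h0, pow_zero]
        · exfalso; apply hx; rw [← hi, hw0, zero_pow (by omega)]
    have hcard2 : Fintype.card F = 2 := by
      have hle : Fintype.card F ≤ 2 := by
        have hsub : (Set.univ : Set F) ⊆ {0, 1} := by
          intro x _
          rcases hall x with hx | hx <;> simp [hx]
        calc Fintype.card F = Nat.card F := (Nat.card_eq_fintype_card).symm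
        _ = (Set.univ : Set F).ncard := (Set.ncard_univ F).symm
        _ ≤ ({0, 1} : Set F).ncard := Set.ncard_le_ncard hsub (Set.toFinite _)
        _ ≤ 2 := Set.ncard_insert_le _ _ |>.trans (by simp [Set.ncard_singleton])
      have : 1 < Fintype.card F := Fintype.one_lt_card
      omega
    have hpp : p = 1 := by
      rw [hF] at hcard2
      rcases Nat.lt_or_ge p 2 with h | h
      · omega
      · exfalso; have : 2 ^ 2 ≤ 2 ^ p := Nat.pow_le_pow_right (by norm_num) h; omega
    have htt : t = 1 := Nat.dvd_one.mp (hpp ▸ hdvd)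
    have hNN : N = 1 := by
      have hM1 : M = 1 := by rw [hMdef, hpp]; norm_num
      have : N * (q - 1) = 1 := by rw [hNM, hM1]
      exact Nat.eq_one_of_mul_eq_one_right this
    constructor
    · intro j hj
      have hj0 : j = 0 := by omega
      refine ⟨⊤, ?_, ?_⟩
      · ext x
        simp only [Submodule.top_coe, Set.mem_univ, Set.mem_insert_iff, Set.mem_setOf_eq, true_iff]
        rcases hall x with hx | hx
        · exact Or.inl hx
        · right; exact ⟨0, by omega, by rw [hx, hj0]; simp⟩
      · rw [htt]
        have hr : Fintype.card F = Fintype.card (ZMod 2) ^ Module.finrank (ZMod 2) F :=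
          Module.card_eq_pow_finrank
        rw [hcard2, ZMod.card] at hr
        have hfr : Module.finrank (ZMod 2) F = 1 := by
          rcases Nat.lt_or_ge (Module.finrank (ZMod 2) F) 2 with h | h
          · have : Module.finrank (ZMod 2) F ≠ 0 := by
              intro h0; rw [h0, pow_zero] at hr; omega
            omega
          · exfalso
            have : 2 ^ 2 ≤ 2 ^ Module.finrank (ZMod 2) F :=
              Nat.pow_le_pow_right (by norm_num) h
            omega
        rw [finrank_top, hfr]
    · intro j hj j' hj' hne
      omega
  · -- main case: w ≠ 0
    set u : Fˣ := Units.mk0 w hw0 with hu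
    have hgen : ∀ x : Fˣ, x ∈ Subgroup.zpowers u := by
      intro x
      obtain ⟨i, hi⟩ := hw (x : F) x.ne_zero
      refine ⟨(i : ℤ), ?_⟩
      show u ^ (i : ℤ) = x
      rw [zpow_natCast]
      ext
      simpa [hu] using hi
    have hordu : orderOf u = M := by
      rw [orderOf_eq_card_of_forall_mem_zpowers hgen, Nat.card_units,
        Nat.card_eq_fintype_card, hF]
    have hord : orderOf w = M := by
      have hval : (u : F) = w := rfl
      rw [← hval, orderOf_units, hordu]
    have hvp : ∀ a : ℕ, ((u ^ a : Fˣ) : F) = w ^ a := fun a => by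
      rw [Units.val_pow_eq_pow_val]; rfl
    have hpmod : ∀ a b : ℕ, w ^ a = w ^ b ↔ a ≡ b [MOD M] := by
      intro a b
      constructor
      · intro h
        have hu2 : u ^ a = u ^ b := Units.ext (by rw [hvp, hvp]; exact h)
        have := pow_eq_pow_iff_modEq.mp hu2
        rwa [hordu] at this
      · intro h
        have hu2 : u ^ a = u ^ b := pow_eq_pow_iff_modEq.mpr (by rwa [hordu])
        rw [← hvp, ← hvp, hu2]
    -- the base subfield set
    set K : Set F := {x : F | x ^ q = x} with hKdef
    have hKmem : ∀ x : F, x ∈ K ↔ x = 0 ∨ ∃ i ≤ q - 2, x = w ^ (i * N) := by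
      intro x
      constructor
      · intro hx
        by_cases hx0 : x = 0
        · exact Or.inl hx0
        right
        have hx1 : x ^ (q - 1) = 1 := by
          have h1 : x ^ (q - 1) * x = 1 * x := by
            rw [one_mul, ← pow_succ]
            have hq1 : q - 1 + 1 = q := by omega
            rw [hq1]; exact hx
          exact mul_right_cancel₀ hx0 h1
        obtain ⟨i, hi⟩ := hw x hx0
        have hdvd1 : M ∣ i * (q - 1) := by
          rw [← hord]
          apply orderOf_dvd_of_pow_eq_one
          rw [pow_mul, hi, hx1]
        have hNdvd : N ∣ i := by
          have h2 : N * (q - 1) ∣ i * (q - 1) := hNM ▸ hdvd1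
          exact (mul_dvd_mul_iff_right (by omega : q - 1 ≠ 0)).mp h2
        obtain ⟨c, hc⟩ := hNdvd
        refine ⟨c % (q - 1), by
          have := Nat.mod_lt c (show 0 < q - 1 by omega); omega, ?_⟩
        rw [← hi, hc]
        symm
        rw [hpmod]
        have h3 : c % (q - 1) ≡ c [MOD q - 1] := Nat.mod_modEq c (q - 1)
        have h4 : c % (q - 1) * N ≡ c * N [MOD (q - 1) * N] := Nat.ModEq.mul_right' _ h3
        rw [show (q - 1) * N = M by rw [mul_comm]; exact hNM] at h4
        calc c % (q - 1) * N ≡ c * N [MOD M] := h4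
        _ = N * c := by ring
      · intro hx
        rcases hx with hx0 | ⟨i, hi, hx⟩
        · show x ^ q = x
          rw [hx0, zero_pow (by omega)]
        · show x ^ q = x
          rw [hx, ← pow_mul, hpmod]
          have hqq : q - 1 + 1 = q := by omega
          have h1 : i * N * q = i * (N * (q - 1)) + i * N := by
            conv_lhs => rw [← hqq]
            ring
          have h2 : M ∣ i * N * q - i * N := by
            rw [h1, hNM, Nat.add_sub_cancel]
            exact dvd_mul_left M i
          exact ((Nat.modEq_iff_dvd' (by omega)).mpr h2).symm
    have hK0 : (0 : F) ∈ K := by rw [hKmem]; exact Or.inl rfl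
    have hKadd : ∀ a b : F, a ∈ K → b ∈ K → a + b ∈ K := by
      intro a b ha hb
      show (a + b) ^ q = a + b
      have ha' : a ^ q = a := ha
      have hb' : b ^ q = b := hb
      rw [hqdef] at ha' hb' ⊢
      rw [add_pow_char_pow, ha', hb']
    -- membership description of S_j
    have hSmem : ∀ j : ℕ, ∀ x : F,
        x ∈ insert (0:F) {x : F | ∃ i ≤ q - 2, x = w ^ (i * N + j)} ↔
          ∃ y ∈ K, x = w ^ j * y := by
      intro j x
      simp only [Set.mem_insert_iff, Set.mem_setOf_eq]
      constructor
      · rintro (rfl | ⟨i, hi, rfl⟩)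
        · exact ⟨0, hK0, by rw [mul_zero]⟩
        · refine ⟨w ^ (i * N), ?_, by rw [← pow_add, add_comm]⟩
          rw [hKmem]; exact Or.inr ⟨i, hi, rfl⟩
      · rintro ⟨y, hy, rfl⟩
        rw [hKmem] at hy
        rcases hy with rfl | ⟨i, hi, rfl⟩
        · exact Or.inl (mul_zero _)
        · exact Or.inr ⟨i, hi, by rw [← pow_add, add_comm]⟩
    -- exponents of the listed powers are strictly below M
    have key : ∀ i j0 : ℕ, i ≤ q - 2 → j0 < N → i * N + j0 < M := by
      intro i j0 hi hj0
      calc i * N + j0 < i * N + N := Nat.add_lt_add_left hj0 _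
      _ ≤ (q - 2) * N + N := Nat.add_le_add_right (Nat.mul_le_mul_right N hi) N
      _ = (q - 2 + 1) * N := (Nat.succ_mul _ _).symm
      _ = (q - 1) * N := by congr 1; omega
      _ = M := by rw [mul_comm]; exact hNM
    have hinj : ∀ a b : ℕ, a < M → b < M → w ^ a = w ^ b → a = b := by
      intro a b ha hb hab
      rw [hpmod] at hab
      exact Nat.ModEq.eq_of_lt_of_lt hab ha hb
    constructor
    · -- subspaces
      intro j hj
      set T : Set F := {x : F | ∃ i ≤ q - 2, x = w ^ (i * N + j)} with hTdef
      set S : Set F := insert (0:F) T with hSdef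
      have hTim : T = (fun i : ℕ => w ^ (i * N + j)) '' Set.Iic (q - 2) := by
        ext x
        simp only [hTdef, Set.mem_setOf_eq, Set.mem_image, Set.mem_Iic]
        constructor
        · rintro ⟨i, hi, rfl⟩; exact ⟨i, hi, rfl⟩
        · rintro ⟨i, hi, rfl⟩; exact ⟨i, hi, rfl⟩
      have hinjOn : Set.InjOn (fun i : ℕ => w ^ (i * N + j)) (Set.Iic (q - 2)) := by
        intro a ha b hb hab
        have heq : a * N + j = b * N + j :=
          hinj _ _ (key a j ha hj) (key b j hb hj) hab
        have heq2 : a * N = b * N := Nat.add_right_cancel heq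
        exact Nat.eq_of_mul_eq_mul_right hN0 heq2
      have hTcard : T.ncard = q - 1 := by
        rw [hTim, Set.ncard_image_of_injOn hinjOn, ← Finset.coe_Iic,
          Set.ncard_coe_finset, Nat.card_Iic]
        omega
      have h0T : (0:F) ∉ T := by
        rintro ⟨i, hi, h0⟩
        exact pow_ne_zero (i * N + j) hw0 h0.symm
      have hScard : S.ncard = q := by
        rw [hSdef, Set.ncard_insert_of_notMem h0T (Set.toFinite T), hTcard]
        omega
      let Wj : Submodule (ZMod 2) F :=
              { carrier := S,
                zero_mem' := Set.mem_insert 0 _,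
                add_mem' := by
                  intro a b ha hb
                  rw [hSdef, hTdef] at ha hb ⊢
                  rw [hSmem] at ha hb ⊢
                  obtain ⟨ya, hya, rfl⟩ := ha
                  obtain ⟨yb, hyb, rfl⟩ := hb
                  exact ⟨ya + yb, hKadd _ _ hya hyb, by ring⟩,
                smul_mem' := by
                  intro c x hx
                  have hc : c = 0 ∨ c = 1 := by
                    fin_cases c
                    · exact Or.inl rfl
                    · exact Or.inr rfl
                  rcases hc with rfl | rfl
                  · rw [zero_smul]; exact Set.mem_insert 0 _
                  · rw [one_smul]; exact hx }
      refine ⟨Wj, rfl, ?_⟩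
      -- finrank = t
      have hWS : (Wj : Set F) = S := rfl
      have hcard1 : Nat.card ↥Wj = q := by
        have h1 : Nat.card ↥(Wj : Set F) = q := by
          rw [Nat.card_coe_set_eq, hWS, hScard]
        exact h1
      haveI : Fintype ↥Wj := Fintype.ofFinite _
      have h3 : Fintype.card ↥Wj = 2 ^ Module.finrank (ZMod 2) ↥Wj := by
        have h4 := Module.card_eq_pow_finrank (K := ZMod 2) (V := ↥Wj)
        rwa [ZMod.card] at h4
      have h5 : (2:ℕ) ^ Module.finrank (ZMod 2) ↥Wj = 2 ^ t := by
        rw [← h3, ← Nat.card_eq_fintype_card, hcard1, hqdef]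
      exact Nat.pow_right_injective (le_refl 2) h5
    · -- pairwise intersections
      intro j hj j' hj' hne
      apply Set.eq_singleton_iff_unique_mem.mpr
      constructor
      · exact ⟨Set.mem_insert 0 _, Set.mem_insert 0 _⟩
      · rintro x ⟨hx1, hx2⟩
        by_contra hx0
        simp only [Set.mem_insert_iff, Set.mem_setOf_eq] at hx1 hx2
        rcases hx1 with rfl | ⟨i, hi, rfl⟩
        · exact hx0 rfl
        rcases hx2 with h | ⟨i', hi', he⟩
        · exact hx0 h
        have heq : i * N + j = i' * N + j' :=
          hinj _ _ (key i j hi hj) (key i' j' hi' hj') he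
        have hjj : j = j' := by
          have h1 : (i * N + j) % N = j := Nat.mul_add_mod_of_lt hj
          have h2 : (i' * N + j') % N = j' := Nat.mul_add_mod_of_lt hj'
          rw [← h1, ← h2, heq]
        exact hne hjj
end
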